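/- Let Γ(x₀, λ) = ∫_{ℝⁿ₊} Λⁿ/² K̃(λȳ + x₀, λyₙ) / (|ȳ|² + (yₙ + D)² - 1)ⁿ dȳ dyₙ - ∫_{ℝⁿ⁻¹} Λ^{(n-1)/2} βₙ D H̃(λȳ + x₀) / (|ȳ|² + D² - 1)^{n-1} dȳ, where K̃ = K ∘ I, H̃ = H ∘ I for bounded continuous K on B̄ⁿ and H on Sⁿ⁻¹. Then as λ + |x₀| → +∞, Γ(x₀, λ) converges to a(D) K(0,…,0,-1) - b(D) H(0,…,0,-1), where a(D) = Λⁿ/² ∫_{ℝⁿ₊} dy/(|ȳ|²+(yₙ+D)²-1)ⁿ and b(D) = Λ^{(n-1)/2} βₙ D ∫_{ℝⁿ⁻¹} dȳ/(|ȳ|²+D²-1)^{n-1}. -/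

import Mathlib

open MeasureTheory Real Filter Metric Topology

noncomputable def invP {m : ℕ} (q : EuclideanSpace ℝ (Fin m) × ℝ) :
    EuclideanSpace ℝ (Fin m) × ℝ :=
  ((2 / (‖q.1‖ ^ 2 + (q.2 + 1) ^ 2)) • q.1,
    (1 - ‖q.1‖ ^ 2 - q.2 ^ 2) / (‖q.1‖ ^ 2 + (q.2 + 1) ^ 2))

lemma invP_dist_le {m : ℕ} (x : EuclideanSpace ℝ (Fin m) × ℝ) (h2 : 0 ≤ x.2)
    (hr : 1 ≤ ‖x‖) :
    dist (invP x) ((0 : EuclideanSpace ℝ (Fin m)), (-1 : ℝ)) ≤ 4 / ‖x‖ := by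
  set a := ‖x.1‖ with ha
  set t := x.2 with ht
  set r := ‖x‖ with hrdef
  have ha0 : 0 ≤ a := norm_nonneg _
  have hr0 : (0:ℝ) < r := lt_of_lt_of_le one_pos hr
  have hrmax : r = max a t := by
    rw [hrdef, Prod.norm_def, ← ha, ← ht, Real.norm_eq_abs, abs_of_nonneg h2]
  have har : a ≤ r := by rw [hrmax]; exact le_max_left _ _
  have htr : t ≤ r := by rw [hrmax]; exact le_max_right _ _
  have hr2 : r ^ 2 ≤ a ^ 2 + t ^ 2 := by
    rw [hrmax]
    rcases max_cases a t with ⟨h, _⟩ | ⟨h, _⟩ <;> rw [h] <;> nlinarith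
  set S := a ^ 2 + (t + 1) ^ 2 with hS
  have hS1 : r ^ 2 + 1 ≤ S := by nlinarith
  have hSpos : 0 < S := by nlinarith
  rw [Prod.dist_eq]
  refine max_le ?_ ?_
  · -- first component
    have : dist (invP x).1 (0 : EuclideanSpace ℝ (Fin m)) = (2 / S) * a := by
      rw [dist_zero_right]
      show ‖(2 / S) • x.1‖ = _
      rw [norm_smul, Real.norm_eq_abs, abs_of_pos (by positivity), ← ha]
    rw [this]
    rw [div_mul_eq_mul_div, div_le_div_iff₀ hSpos hr0]
    nlinarith
  · -- second component
    have : dist (invP x).2 (-1 : ℝ) = (2 + 2 * t) / S := by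
      show |(1 - a ^ 2 - t ^ 2) / S - (-1)| = _
      rw [div_sub' (ne_of_gt hSpos)]
      rw [abs_div, abs_of_pos hSpos]
      congr 1
      rw [abs_of_nonneg (by nlinarith)]
      ring
    rw [this, div_le_div_iff₀ hSpos hr0]
    -- (2+2t) r ≤ 4 S
    rcases le_or_gt (r / 2) (t + 1) with h | h
    · nlinarith
    · have hra : r = a := by
        rw [hrmax]; rcases max_cases a t with ⟨hh, _⟩ | ⟨hh, hh2⟩
        · exact hh
        · exfalso; rw [hrmax, hh] at h; nlinarith
      nlinarith

lemma key_tendsto {X : Type*} [MeasurableSpace X] {μ : Measure X} {ι : Type*} {l : Filter ι}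
    {w : X → ℝ} (hw : Integrable w μ) (hw0 : 0 ≤ᵐ[μ] w)
    {g : ι → X → ℝ} {c C : ℝ}
    (hmeas : ∀ q, AEStronglyMeasurable (g q) μ)
    (hgb : ∀ q x, |g q x| ≤ C) (hcb : |c| ≤ C)
    (hsmall : ∀ ε > 0, ∃ B : ι → Set X, (∀ q, MeasurableSet (B q)) ∧
      (∀ᶠ q in l, ∀ᵐ x ∂μ, x ∉ B q → |g q x - c| ≤ ε) ∧
      Tendsto (fun q => ∫ x in B q, w x ∂μ) l (𝓝 0)) :
    Tendsto (fun q => ∫ x, g q x * w x ∂μ) l (𝓝 (c * ∫ x, w x ∂μ)) := by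
  have hC0 : 0 ≤ C := le_trans (abs_nonneg c) hcb
  have hint : ∀ q, Integrable (fun x => g q x * w x) μ := by
    intro q
    refine Integrable.mono' (hw.norm.const_mul C) ((hmeas q).mul hw.1) ?_
    filter_upwards with x
    rw [norm_mul]
    exact mul_le_mul (hgb q x) le_rfl (norm_nonneg _) hC0
  have hint2 : ∀ q, Integrable (fun x => (g q x - c) * w x) μ := by
    intro q
    refine Integrable.mono' (hw.norm.const_mul (2 * C)) (((hmeas q).sub
      aestronglyMeasurable_const).mul hw.1) ?_
    filter_upwards with x
    rw [norm_mul]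
    refine mul_le_mul ?_ le_rfl (norm_nonneg _) (by positivity)
    calc ‖g q x - c‖ ≤ |g q x| + |c| := norm_sub_le _ _
      _ ≤ 2 * C := by linarith [hgb q x]
  set W := ∫ x, w x ∂μ with hW
  have hW0 : 0 ≤ W := integral_nonneg_of_ae hw0
  rw [Metric.tendsto_nhds]
  intro ε hε
  set ε₁ := ε / (2 * (W + 1)) with hε₁def
  have hε₁ : 0 < ε₁ := by positivity
  obtain ⟨B, hBm, hBae, hBt⟩ := hsmall ε₁ hε₁
  set ε₂ := ε / (2 * (2 * C + 1)) with hε₂def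
  have hε₂ : 0 < ε₂ := by positivity
  have hBev : ∀ᶠ q in l, |∫ x in B q, w x ∂μ| < ε₂ := by
    have := Metric.tendsto_nhds.mp hBt ε₂ hε₂
    simpa [Real.dist_eq] using this
  filter_upwards [hBae, hBev] with q hq1 hq2
  rw [Real.dist_eq]
  have hsplit : ∫ x, g q x * w x ∂μ - c * W =
      (∫ x in B q, (g q x - c) * w x ∂μ) + ∫ x in (B q)ᶜ, (g q x - c) * w x ∂μ := by
    rw [integral_add_compl (hBm q) (hint2 q)]
    rw [hW, ← integral_const_mul, ← integral_sub (hint q) (hw.const_mul c)]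
    congr 1; funext x; ring
  rw [hsplit]
  have hBw0 : 0 ≤ ∫ x in B q, w x ∂μ := integral_nonneg_of_ae (ae_restrict_of_ae hw0)
  have h1 : |∫ x in B q, (g q x - c) * w x ∂μ| ≤ 2 * C * ∫ x in B q, w x ∂μ := by
    calc |∫ x in B q, (g q x - c) * w x ∂μ| ≤ ∫ x in B q, |g q x - c| * |w x| ∂μ := by
          simpa [Real.norm_eq_abs] using
            norm_integral_le_integral_norm (μ := μ.restrict (B q))
              (f := fun x => (g q x - c) * w x)
      _ ≤ ∫ x in B q, 2 * C * w x ∂μ := by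
          refine integral_mono_ae (((hint2 q).abs.congr (Eventually.of_forall fun x => (abs_mul _ _))).restrict)
            ((hw.const_mul (2 * C)).restrict) ?_
          filter_upwards [ae_restrict_of_ae hw0] with x hx
          rw [abs_of_nonneg hx]
          refine mul_le_mul ?_ le_rfl hx (by positivity)
          calc |g q x - c| ≤ |g q x| + |c| := abs_sub _ _
            _ ≤ 2 * C := by linarith [hgb q x]
      _ = 2 * C * ∫ x in B q, w x ∂μ := integral_const_mul _ _
  have h2 : |∫ x in (B q)ᶜ, (g q x - c) * w x ∂μ| ≤ ε₁ * W := by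
    calc |∫ x in (B q)ᶜ, (g q x - c) * w x ∂μ| ≤ ∫ x in (B q)ᶜ, |g q x - c| * |w x| ∂μ := by
          simpa [Real.norm_eq_abs] using
            norm_integral_le_integral_norm (μ := μ.restrict (B q)ᶜ)
              (f := fun x => (g q x - c) * w x)
      _ ≤ ∫ x in (B q)ᶜ, ε₁ * w x ∂μ := by
          refine integral_mono_ae (((hint2 q).abs.congr (Eventually.of_forall fun x => (abs_mul _ _))).restrict)
            ((hw.const_mul ε₁).restrict) ?_
          filter_upwards [ae_restrict_of_ae hw0, ae_restrict_of_ae hq1,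
            ae_restrict_mem (hBm q).compl] with x hx hx2 hx3
          rw [abs_of_nonneg hx]
          exact mul_le_mul (hx2 hx3) le_rfl hx hε₁.le
      _ ≤ ε₁ * ∫ x, w x ∂μ := by
          rw [integral_const_mul]
          exact mul_le_mul le_rfl (setIntegral_le_integral hw hw0)
            (integral_nonneg_of_ae (ae_restrict_of_ae hw0)) hε₁.le
      _ = ε₁ * W := rfl
  have hfin : |(∫ x in B q, (g q x - c) * w x ∂μ) + ∫ x in (B q)ᶜ, (g q x - c) * w x ∂μ|
      ≤ 2 * C * ∫ x in B q, w x ∂μ + ε₁ * W := by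
    calc |(∫ x in B q, (g q x - c) * w x ∂μ) + ∫ x in (B q)ᶜ, (g q x - c) * w x ∂μ|
        ≤ |∫ x in B q, (g q x - c) * w x ∂μ| + |∫ x in (B q)ᶜ, (g q x - c) * w x ∂μ| :=
          abs_add_le _ _
      _ ≤ _ := add_le_add h1 h2
  refine lt_of_le_of_lt hfin ?_
  have hb1 : 2 * C * ∫ x in B q, w x ∂μ < ε / 2 := by
    have : 2 * C * ∫ x in B q, w x ∂μ ≤ 2 * C * ε₂ := by
      refine mul_le_mul le_rfl ?_ hBw0 (by positivity)
      calc (∫ x in B q, w x ∂μ) ≤ |∫ x in B q, w x ∂μ| := le_abs_self _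
        _ ≤ ε₂ := hq2.le
    refine lt_of_le_of_lt this ?_
    have heq : 2 * C * ε₂ = ε * (2 * C) / (2 * (2 * C + 1)) := by rw [hε₂def]; ring
    rw [heq, div_lt_div_iff₀ (by positivity) (by norm_num)]
    nlinarith
  have hb2 : ε₁ * W < ε / 2 := by
    rw [hε₁def]
    rw [div_mul_eq_mul_div, div_lt_div_iff₀ (by positivity) (by norm_num)]
    nlinarith
  linarith

lemma ballmass {X : Type*} [NormedAddCommGroup X] [NormedSpace ℝ X] [MeasurableSpace X]
    [OpensMeasurableSpace X] {μ : Measure X}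
    {w : X → ℝ} (hw : Integrable w μ) (hw0 : 0 ≤ᵐ[μ] w)
    {wmax : ℝ} (hwm : ∀ᵐ x ∂μ, w x ≤ wmax)
    {d : ℕ} (hd : 0 < d) {κ : ℝ} (hκ0 : 0 ≤ κ)
    (hvol : ∀ (c : X) (r : ℝ), 0 < r → μ (Metric.ball c r) ≤ ENNReal.ofReal (κ * r ^ d))
    {m : ℕ} {R : ℝ} (hR : 1 ≤ R)
    (v : EuclideanSpace ℝ (Fin m) × ℝ → X) (hv : ∀ q, ‖v q‖ = ‖q.1‖) :
    Tendsto (fun q : EuclideanSpace ℝ (Fin m) × ℝ =>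
        ∫ x in {x | ‖q.2 • x + v q‖ < R}, w x ∂μ)
      ((comap (fun q : EuclideanSpace ℝ (Fin m) × ℝ => q.2 + ‖q.1‖) atTop) ⊓
        𝓟 {q : EuclideanSpace ℝ (Fin m) × ℝ | 0 < q.2}) (𝓝 0) := by
  have hR0 : (0:ℝ) < R := lt_of_lt_of_le one_pos hR
  set wmax' := max wmax 0 with hwmax'
  have hwm' : ∀ᵐ x ∂μ, w x ≤ wmax' := hwm.mono fun x hx => le_trans hx (le_max_left _ _)
  have hwmax'0 : 0 ≤ wmax' := le_max_right _ _
  rw [Metric.tendsto_nhds]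
  intro ε hε
  -- tail
  obtain ⟨T, hT⟩ : ∃ T : ℕ, ∫ x in (Metric.ball (0:X) T)ᶜ, w x ∂μ < ε := by
    have hmono : Monotone (fun n : ℕ => Metric.ball (0:X) (n:ℝ)) := fun i j hij =>
      Metric.ball_subset_ball (by exact_mod_cast hij)
    have hunion : (⋃ n : ℕ, Metric.ball (0:X) (n:ℝ)) = Set.univ := by
      ext x
      simp only [Set.mem_iUnion, Metric.mem_ball, Set.mem_univ, iff_true]
      obtain ⟨n, hn⟩ := exists_nat_gt (dist x 0)
      exact ⟨n, hn⟩
    have htend := tendsto_setIntegral_of_monotone (fun n => measurableSet_ball) hmono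
      (by rw [hunion]; exact hw.integrableOn)
    rw [hunion] at htend
    simp only [Measure.restrict_univ] at htend
    have h2 : Tendsto (fun n : ℕ => ∫ x in (Metric.ball (0:X) (n:ℝ))ᶜ, w x ∂μ) atTop (𝓝 0) := by
      have : ∀ n : ℕ, ∫ x in (Metric.ball (0:X) (n:ℝ))ᶜ, w x ∂μ =
          (∫ x, w x ∂μ) - ∫ x in Metric.ball (0:X) (n:ℝ), w x ∂μ := by
        intro n
        rw [← integral_add_compl measurableSet_ball hw]
        ring
      simp only [this]
      have := (tendsto_const_nhds (x := ∫ x, w x ∂μ) (f := atTop (α := ℕ))).sub htend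
      simpa using this
    exact ((h2.eventually_lt_const hε).and (Eventually.of_forall fun _ => trivial)).exists.imp
      fun n hn => hn.1
  -- lambda threshold
  obtain ⟨lam₀, hlam₀⟩ : ∃ lam₀ : ℝ, ∀ lam ≥ lam₀, wmax' * (κ * (R / lam) ^ d) < ε := by
    have h1 : Tendsto (fun lam : ℝ => R / lam) atTop (𝓝 0) :=
      tendsto_const_nhds.div_atTop tendsto_id
    have h2 : Tendsto (fun lam : ℝ => wmax' * (κ * (R / lam) ^ d)) atTop (𝓝 0) := by
      have := ((h1.pow d).const_mul κ).const_mul wmax'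
      simpa [zero_pow hd.ne'] using this
    exact eventually_atTop.mp (h2.eventually_lt_const hε)
  set lam₁ := max lam₀ 1 with hlam₁
  have hlam₁1 : (1:ℝ) ≤ lam₁ := le_max_right _ _
  set M := lam₁ * T + lam₁ + R with hM
  have hev : ∀ᶠ q : EuclideanSpace ℝ (Fin m) × ℝ in
      (comap (fun q : EuclideanSpace ℝ (Fin m) × ℝ => q.2 + ‖q.1‖) atTop) ⊓
        𝓟 {q : EuclideanSpace ℝ (Fin m) × ℝ | 0 < q.2},
      M ≤ q.2 + ‖q.1‖ ∧ 0 < q.2 := by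
    refine Eventually.and ?_ ?_
    · exact (tendsto_comap.eventually (eventually_ge_atTop M)).filter_mono inf_le_left
    · exact (eventually_principal.mpr fun q hq => hq).filter_mono inf_le_right
  filter_upwards [hev] with q hq
  obtain ⟨hM', hq2⟩ := hq
  set Bq := {x : X | ‖q.2 • x + v q‖ < R} with hBq
  have hBm : MeasurableSet Bq := by
    have : Bq = (fun x => q.2 • x + v q) ⁻¹' Metric.ball 0 R := by
      ext x; simp [hBq, Metric.mem_ball, dist_zero_right]
    rw [this]
    exact (Metric.isOpen_ball.preimage ((continuous_id.const_smul q.2).add continuous_const)).measurableSet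
  have hB0 : 0 ≤ ∫ x in Bq, w x ∂μ := integral_nonneg_of_ae (ae_restrict_of_ae hw0)
  rw [Real.dist_eq, sub_zero, abs_of_nonneg hB0]
  rcases le_or_gt lam₁ q.2 with hlam | hlam
  · -- ball case
    have hq2' : (0:ℝ) < q.2 := lt_of_lt_of_le (lt_of_lt_of_le one_pos hlam₁1) hlam
    have hset : Bq = Metric.ball (-(q.2⁻¹ • v q)) (R / q.2) := by
      ext x
      simp only [hBq, Set.mem_setOf_eq, Metric.mem_ball, dist_eq_norm, sub_neg_eq_add]
      rw [show q.2 • x + v q = q.2 • (x + q.2⁻¹ • v q) by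
        rw [smul_add, smul_smul, mul_inv_cancel₀ (ne_of_gt hq2'), one_smul]]
      rw [norm_smul, Real.norm_eq_abs, abs_of_pos hq2']
      rw [lt_div_iff₀ hq2', mul_comm]
    have hr : (0:ℝ) < R / q.2 := by positivity
    have hfin : μ Bq < ⊤ := by
      rw [hset]
      exact lt_of_le_of_lt (hvol _ _ hr) ENNReal.ofReal_lt_top
    have hmeas : (μ Bq).toReal ≤ κ * (R / q.2) ^ d := by
      rw [hset]
      refine ENNReal.toReal_le_of_le_ofReal (by positivity) (hvol _ _ hr)
    calc ∫ x in Bq, w x ∂μ ≤ ∫ x in Bq, wmax' ∂μ := by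
          refine integral_mono_ae hw.restrict (integrableOn_const hfin.ne) ?_
          exact ae_restrict_of_ae hwm'
      _ = (μ Bq).toReal * wmax' := by rw [setIntegral_const, smul_eq_mul, Measure.real]
      _ ≤ wmax' * (κ * (R / q.2) ^ d) := by
          rw [mul_comm]
          exact mul_le_mul le_rfl hmeas ENNReal.toReal_nonneg hwmax'0
      _ < ε := hlam₀ q.2 (le_trans (le_max_left _ _) hlam)
  · -- tail case
    have hsub : Bq ⊆ (Metric.ball (0:X) (T:ℝ))ᶜ := by
      intro x hx
      simp only [hBq, Set.mem_setOf_eq] at hx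
      simp only [Set.mem_compl_iff, Metric.mem_ball, dist_zero_right, not_lt]
      have h1 : ‖v q‖ ≤ ‖q.2 • x + v q‖ + ‖q.2 • x‖ := by
        have := norm_sub_le (q.2 • x + v q) (q.2 • x)
        simpa using this
      have h2 : q.2 * ‖x‖ ≥ ‖q.1‖ - R := by
        rw [hv q] at h1
        have : ‖q.2 • x‖ = q.2 * ‖x‖ := by
          rw [norm_smul, Real.norm_eq_abs, abs_of_pos hq2]
        linarith
      have h3 : ‖q.1‖ ≥ M - q.2 := by linarith
      have h4 : q.2 * ‖x‖ ≥ lam₁ * T := by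
        have : M - q.2 - R ≥ lam₁ * T := by
          rw [hM]
          linarith
        linarith
      have h5 : q.2 * (T:ℝ) ≤ lam₁ * T := by
        exact mul_le_mul hlam.le le_rfl (Nat.cast_nonneg _) (by linarith)
      have := le_trans h5 h4
      exact le_of_mul_le_mul_left this hq2
    calc ∫ x in Bq, w x ∂μ ≤ ∫ x in (Metric.ball (0:X) (T:ℝ))ᶜ, w x ∂μ :=
          setIntegral_mono_set hw.restrict (ae_restrict_of_ae hw0)
            (HasSubset.Subset.eventuallyLE hsub)
      _ < ε := hT

lemma measurable_invP {m : ℕ} : Measurable (invP (m := m)) := by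
  unfold invP
  fun_prop

lemma inv_pow_bound (D : ℝ) (hD : 1 < D) (k : ℕ) (a u : ℝ) (ha : 0 ≤ a)
    (hu : a ^ 2 + D ^ 2 - 1 ≤ u) :
    |1 / u ^ k| ≤ (2 * (1 + (D ^ 2 - 1)⁻¹)) ^ k * ((1 + a) ^ (2 * k))⁻¹ := by
  have hD2 : (0:ℝ) < D ^ 2 - 1 := by nlinarith
  set c₁ := 2 * (1 + (D ^ 2 - 1)⁻¹) with hc₁
  have hc₁0 : (0:ℝ) < c₁ := by positivity
  have hu0 : 0 < u := by nlinarith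
  have hkey : (1 + a) ^ 2 ≤ c₁ * (a ^ 2 + D ^ 2 - 1) := by
    have h1 : (D ^ 2 - 1) * (D ^ 2 - 1)⁻¹ = 1 := mul_inv_cancel₀ (ne_of_gt hD2)
    nlinarith [sq_nonneg a, sq_nonneg (1 - a), mul_pos hD2 (inv_pos.mpr hD2),
      mul_nonneg (sq_nonneg a) (inv_pos.mpr hD2).le]
  have h1 : (1 + a) ^ (2 * k) ≤ c₁ ^ k * u ^ k := by
    rw [pow_mul]
    calc ((1 + a) ^ 2) ^ k ≤ (c₁ * (a ^ 2 + D ^ 2 - 1)) ^ k :=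
          pow_le_pow_left₀ (by positivity) hkey k
      _ ≤ (c₁ * u) ^ k := pow_le_pow_left₀ (by nlinarith [sq_nonneg a])
          (mul_le_mul le_rfl hu (by nlinarith) hc₁0.le) k
      _ = c₁ ^ k * u ^ k := mul_pow _ _ _
  rw [abs_of_pos (by positivity), one_div]
  have h2 : (1 + a) ^ (2 * k) / c₁ ^ k ≤ u ^ k :=
    (div_le_iff₀ (by positivity)).mpr (by rw [mul_comm (u ^ k)]; exact h1)
  calc (u ^ k)⁻¹ ≤ ((1 + a) ^ (2 * k) / c₁ ^ k)⁻¹ := by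
        refine inv_anti₀ (by positivity) h2
    _ = c₁ ^ k * ((1 + a) ^ (2 * k))⁻¹ := by
        rw [inv_div, div_eq_mul_inv]

lemma dom_integrable {X : Type*} [NormedAddCommGroup X] [NormedSpace ℝ X]
    [FiniteDimensional ℝ X] [MeasurableSpace X] [BorelSpace X]
    (μ : Measure X) [μ.IsAddHaarMeasure] (c : ℝ) (k : ℕ)
    (hk : Module.finrank ℝ X < 2 * k) :
    Integrable (fun x => c * ((1 + ‖x‖) ^ (2 * k))⁻¹) μ := by
  have h := (integrable_one_add_norm (μ := μ) (r := ((2 * k : ℕ) : ℝ))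
    (by exact_mod_cast hk)).const_mul c
  refine h.congr (Eventually.of_forall fun x => ?_)
  simp only []
  rw [show (-((2 * k : ℕ) : ℝ)) = -(((2 * k : ℕ) : ℝ)) from rfl, Real.rpow_neg (by positivity),
    Real.rpow_natCast]

set_option maxHeartbeats 2000000 in
/-- As `λ + |x₀| → +∞` (with `λ > 0`), the reduced functional
`Γ(x₀,λ) = ∫_{ℝⁿ₊} Λ^{n/2} K̃(λȳ+x₀, λyₙ)/(|ȳ|²+(yₙ+D)²-1)ⁿ
  - ∫_{ℝⁿ⁻¹} Λ^{(n-1)/2} βₙ D H̃(λȳ+x₀)/(|ȳ|²+D²-1)^{n-1}`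
(where `K̃ = K ∘ I`, `H̃ = H ∘ I`) converges to `a(D) K(0,…,0,-1) - b(D) H(0,…,0,-1)`.
Here the dimension is `n = m + 1 ≥ 2`. -/
theorem gamma_tendsto_south_pole (m : ℕ) (hm : 1 ≤ m) (D Λ β : ℝ)
    (hD : 1 < D) (hΛ : 0 < Λ) (hβ : 0 < β)
    (K H : EuclideanSpace ℝ (Fin m) × ℝ → ℝ)
    (hK : Continuous K) (hKb : ∃ Cb, ∀ p, |K p| ≤ Cb)
    (hH : Continuous H) (hHb : ∃ Cb, ∀ p, |H p| ≤ Cb) :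
    Tendsto
      (fun q : EuclideanSpace ℝ (Fin m) × ℝ =>
        (∫ p in {p : EuclideanSpace ℝ (Fin m) × ℝ | 0 < p.2},
          Λ ^ (((m : ℝ) + 1) / 2) * K (invP (q.2 • p.1 + q.1, q.2 * p.2)) /
            (‖p.1‖ ^ 2 + (p.2 + D) ^ 2 - 1) ^ (m + 1)) -
        ∫ y : EuclideanSpace ℝ (Fin m),
          Λ ^ ((m : ℝ) / 2) * β * D * H (invP (q.2 • y + q.1, 0)) /
            (‖y‖ ^ 2 + D ^ 2 - 1) ^ m)
      ((Filter.comap (fun q : EuclideanSpace ℝ (Fin m) × ℝ => q.2 + ‖q.1‖) atTop) ⊓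
        Filter.principal {q : EuclideanSpace ℝ (Fin m) × ℝ | 0 < q.2})
      (nhds
        ((Λ ^ (((m : ℝ) + 1) / 2) *
            ∫ p in {p : EuclideanSpace ℝ (Fin m) × ℝ | 0 < p.2},
              1 / (‖p.1‖ ^ 2 + (p.2 + D) ^ 2 - 1) ^ (m + 1)) * K (0, -1) -
          (Λ ^ ((m : ℝ) / 2) * β * D *
            ∫ y : EuclideanSpace ℝ (Fin m), 1 / (‖y‖ ^ 2 + D ^ 2 - 1) ^ m) * H (0, -1))) := by
  obtain ⟨CbK, hCbK⟩ := hKb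
  obtain ⟨CbH, hCbH⟩ := hHb
  have hD2 : (0:ℝ) < D ^ 2 - 1 := by nlinarith
  haveI : Nonempty (Fin m) := ⟨⟨0, hm⟩⟩
  haveI hHaarProd : (volume : Measure (EuclideanSpace ℝ (Fin m) × ℝ)).IsAddHaarMeasure := by
    have : (volume : Measure (EuclideanSpace ℝ (Fin m) × ℝ))
        = (volume : Measure (EuclideanSpace ℝ (Fin m))).prod volume := rfl
    rw [this]; infer_instance
  set l := (Filter.comap (fun q : EuclideanSpace ℝ (Fin m) × ℝ => q.2 + ‖q.1‖) atTop) ⊓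
      Filter.principal {q : EuclideanSpace ℝ (Fin m) × ℝ | 0 < q.2} with hl
  set S := {p : EuclideanSpace ℝ (Fin m) × ℝ | 0 < p.2} with hSdef
  have hSmeas : MeasurableSet S :=
    (isOpen_lt continuous_const continuous_snd).measurableSet
  have hq2pos : ∀ᶠ q : EuclideanSpace ℝ (Fin m) × ℝ in l, 0 < q.2 :=
    (eventually_principal.mpr fun q hq => hq).filter_mono inf_le_right
  set c₁ := 2 * (1 + (D ^ 2 - 1)⁻¹) with hc₁
  set w₁ : EuclideanSpace ℝ (Fin m) × ℝ → ℝ :=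
    fun p => 1 / (‖p.1‖ ^ 2 + (p.2 + D) ^ 2 - 1) ^ (m + 1) with hw₁def
  set w₂ : EuclideanSpace ℝ (Fin m) → ℝ :=
    fun y => 1 / (‖y‖ ^ 2 + D ^ 2 - 1) ^ m with hw₂def
  -- positivity facts
  have hden2 : ∀ y : EuclideanSpace ℝ (Fin m), 0 < ‖y‖ ^ 2 + D ^ 2 - 1 := by
    intro y
    have := sq_nonneg ‖y‖
    nlinarith
  have hden1 : ∀ p : EuclideanSpace ℝ (Fin m) × ℝ, 0 < p.2 →
      ‖p‖ ^ 2 + D ^ 2 - 1 ≤ ‖p.1‖ ^ 2 + (p.2 + D) ^ 2 - 1 := by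
    intro p hp
    have h1 : ‖p‖ ^ 2 ≤ ‖p.1‖ ^ 2 + p.2 ^ 2 := by
      rw [Prod.norm_def, Real.norm_eq_abs]
      rcases max_cases ‖p.1‖ |p.2| with ⟨h, _⟩ | ⟨h, _⟩ <;> rw [h]
      · nlinarith [sq_nonneg p.2, sq_abs p.2]
      · nlinarith [sq_nonneg ‖p.1‖, sq_abs p.2]
    have h2 : p.2 ^ 2 + D ^ 2 ≤ (p.2 + D) ^ 2 := by nlinarith
    linarith
  have hden1pos : ∀ p : EuclideanSpace ℝ (Fin m) × ℝ, 0 < p.2 →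
      0 < ‖p.1‖ ^ 2 + (p.2 + D) ^ 2 - 1 := by
    intro p hp
    have := hden1 p hp
    have h0 : 0 < ‖p‖ ^ 2 + D ^ 2 - 1 := by nlinarith [sq_nonneg ‖p‖]
    linarith
  -- integrability of w₂
  have hw₂meas : Continuous w₂ := by
    refine Continuous.div continuous_const ?_ fun y => pow_ne_zero _ (ne_of_gt (hden2 y))
    exact (((continuous_norm.pow 2).add continuous_const).sub continuous_const).pow m
  have hI2 : Integrable w₂ := by
    refine Integrable.mono'
      (dom_integrable volume (c₁ ^ m) m (by rw [finrank_euclideanSpace_fin]; omega))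
      hw₂meas.aestronglyMeasurable (Eventually.of_forall fun y => ?_)
    rw [Real.norm_eq_abs]
    exact inv_pow_bound D hD m ‖y‖ _ (norm_nonneg y) le_rfl
  have hw₂0 : ∀ y, 0 ≤ w₂ y := fun y => by
    have := hden2 y; positivity
  have hw₂max : ∀ y, w₂ y ≤ 1 / (D ^ 2 - 1) ^ m := by
    intro y
    exact one_div_le_one_div_of_le (by positivity)
      (pow_le_pow_left₀ hD2.le (by nlinarith [sq_nonneg ‖y‖]) m)
  -- integrability of w₁ on S
  have hw₁meas : Measurable w₁ := by fun_prop
  have hI1 : IntegrableOn w₁ S := by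
    refine Integrable.mono'
      ((dom_integrable volume (c₁ ^ (m + 1)) (m + 1)
        (by simp only [Module.finrank_prod, finrank_euclideanSpace_fin,
            Module.finrank_self]; omega)).restrict)
      hw₁meas.aestronglyMeasurable ?_
    rw [ae_restrict_iff' hSmeas]
    refine Eventually.of_forall fun p hp => ?_
    rw [Real.norm_eq_abs]
    exact inv_pow_bound D hD (m + 1) ‖p‖ _ (norm_nonneg p) (hden1 p hp)
  have hw₁0 : 0 ≤ᵐ[volume.restrict S] w₁ := by
    filter_upwards [ae_restrict_mem hSmeas] with p hp
    have := hden1pos p hp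
    positivity
  have hw₁max : ∀ᵐ p ∂(volume.restrict S), w₁ p ≤ 1 / (D ^ 2 - 1) ^ (m + 1) := by
    filter_upwards [ae_restrict_mem hSmeas] with p hp
    exact one_div_le_one_div_of_le (by positivity)
      (pow_le_pow_left₀ hD2.le (by have := hden1 p hp; nlinarith [sq_nonneg ‖p‖]) (m + 1))
  -- volume of balls
  have hvol2 : ∀ (c : EuclideanSpace ℝ (Fin m)) (r : ℝ), 0 < r →
      volume (Metric.ball c r) ≤
        ENNReal.ofReal ((volume (Metric.ball (0:EuclideanSpace ℝ (Fin m)) 1)).toReal * r ^ m) := by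
    intro c r hr
    rw [Measure.addHaar_ball _ _ hr.le, finrank_euclideanSpace_fin]
    rw [ENNReal.ofReal_mul (by positivity), mul_comm]
    rw [ENNReal.ofReal_toReal measure_ball_lt_top.ne]
  have hvol1 : ∀ (c : EuclideanSpace ℝ (Fin m) × ℝ) (r : ℝ), 0 < r →
      (volume.restrict S) (Metric.ball c r) ≤
        ENNReal.ofReal
          ((volume (Metric.ball (0:EuclideanSpace ℝ (Fin m) × ℝ) 1)).toReal * r ^ (m + 1)) := by
    intro c r hr
    rw [Measure.restrict_apply measurableSet_ball]
    refine le_trans (measure_mono Set.inter_subset_left) ?_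
    rw [Measure.addHaar_ball _ _ hr.le]
    rw [show Module.finrank ℝ (EuclideanSpace ℝ (Fin m) × ℝ) = m + 1 by
      simp [Module.finrank_prod, finrank_euclideanSpace_fin]]
    rw [ENNReal.ofReal_mul (by positivity), mul_comm]
    rw [ENNReal.ofReal_toReal measure_ball_lt_top.ne]
  -- boundary convergence
  have T₂ : Tendsto (fun q : EuclideanSpace ℝ (Fin m) × ℝ =>
      ∫ y, H (invP (q.2 • y + q.1, (0:ℝ))) * w₂ y) l
      (𝓝 (H (0, -1) * ∫ y, w₂ y)) := by
    refine key_tendsto hI2 (Eventually.of_forall hw₂0) ?_ (fun q y => hCbH _) (hCbH _) ?_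
    · intro q
      exact (hH.measurable.comp (measurable_invP.comp
        (by fun_prop : Measurable (fun y : EuclideanSpace ℝ (Fin m) =>
          ((q.2 • y + q.1, (0:ℝ)) : EuclideanSpace ℝ (Fin m) × ℝ))))).aestronglyMeasurable
    · intro ε hε
      obtain ⟨δ, hδ0, hδ⟩ := Metric.continuousAt_iff.mp (hH.continuousAt (x := ((0 : EuclideanSpace ℝ (Fin m)), (-1:ℝ)))) ε hε
      obtain ⟨R, hR1, hRδ⟩ : ∃ R : ℝ, 1 ≤ R ∧ 4 / R < δ := by
        refine ⟨4 / δ + 1, ?_, ?_⟩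
        · have : 0 < 4 / δ := by positivity
          linarith
        · have h0 : 0 < 4 / δ := by positivity
          rw [div_lt_iff₀ (by linarith)]
          have h4 : δ * (4 / δ) = 4 := by field_simp
          nlinarith
      refine ⟨fun q => {y : EuclideanSpace ℝ (Fin m) | ‖q.2 • y + q.1‖ < R}, ?_, ?_, ?_⟩
      · intro q
        dsimp only
        have : {y : EuclideanSpace ℝ (Fin m) | ‖q.2 • y + q.1‖ < R}
            = (fun y => q.2 • y + q.1) ⁻¹' Metric.ball 0 R := by
          ext y; simp [Metric.mem_ball, dist_zero_right]
        rw [this]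
        exact (Metric.isOpen_ball.preimage
          ((continuous_id.const_smul q.2).add continuous_const)).measurableSet
      · refine Eventually.of_forall fun q => Eventually.of_forall fun y hy => ?_
        set x : EuclideanSpace ℝ (Fin m) × ℝ := (q.2 • y + q.1, (0:ℝ)) with hx
        have hxn : ‖x‖ = ‖q.2 • y + q.1‖ := by
          rw [hx, Prod.norm_def]
          simp
        have hxR : R ≤ ‖x‖ := by
          rw [hxn]
          exact not_lt.mp hy
        have hdist := invP_dist_le x le_rfl (le_trans hR1 hxR)
        have : dist (invP x) ((0 : EuclideanSpace ℝ (Fin m)), (-1:ℝ)) < δ := by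
          refine lt_of_le_of_lt (le_trans hdist ?_) hRδ
          exact div_le_div_of_nonneg_left (by norm_num) (by linarith) hxR
        have := hδ this
        rw [Real.dist_eq] at this
        exact this.le
      · exact ballmass hI2 (Eventually.of_forall hw₂0) (Eventually.of_forall hw₂max)
          hm ENNReal.toReal_nonneg hvol2 hR1 (fun q => q.1) (fun q => rfl)
  -- interior convergence
  have T₁ : Tendsto (fun q : EuclideanSpace ℝ (Fin m) × ℝ =>
      ∫ p in S, K (invP (q.2 • p.1 + q.1, q.2 * p.2)) * w₁ p) l
      (𝓝 (K (0, -1) * ∫ p in S, w₁ p)) := by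
    refine key_tendsto hI1 hw₁0 ?_ (fun q p => hCbK _) (hCbK _) ?_
    · intro q
      exact (hK.measurable.comp (measurable_invP.comp
        (by fun_prop : Measurable (fun p : EuclideanSpace ℝ (Fin m) × ℝ =>
          ((q.2 • p.1 + q.1, q.2 * p.2) : EuclideanSpace ℝ (Fin m) × ℝ))))).aestronglyMeasurable
    · intro ε hε
      obtain ⟨δ, hδ0, hδ⟩ := Metric.continuousAt_iff.mp (hK.continuousAt (x := ((0 : EuclideanSpace ℝ (Fin m)), (-1:ℝ)))) ε hε
      obtain ⟨R, hR1, hRδ⟩ : ∃ R : ℝ, 1 ≤ R ∧ 4 / R < δ := by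
        refine ⟨4 / δ + 1, ?_, ?_⟩
        · have : 0 < 4 / δ := by positivity
          linarith
        · have h0 : 0 < 4 / δ := by positivity
          rw [div_lt_iff₀ (by linarith)]
          have h4 : δ * (4 / δ) = 4 := by field_simp
          nlinarith
      refine ⟨fun q => {p : EuclideanSpace ℝ (Fin m) × ℝ |
        ‖q.2 • p + ((q.1, (0:ℝ)) : EuclideanSpace ℝ (Fin m) × ℝ)‖ < R}, ?_, ?_, ?_⟩
      · intro q
        dsimp only
        have : {p : EuclideanSpace ℝ (Fin m) × ℝ |
            ‖q.2 • p + ((q.1, (0:ℝ)) : EuclideanSpace ℝ (Fin m) × ℝ)‖ < R}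
            = (fun p : EuclideanSpace ℝ (Fin m) × ℝ => q.2 • p + (q.1, (0:ℝ)))
              ⁻¹' Metric.ball 0 R := by
          ext p; simp [Metric.mem_ball, dist_zero_right]
        rw [this]
        exact (Metric.isOpen_ball.preimage
          ((continuous_id.const_smul q.2).add continuous_const)).measurableSet
      · filter_upwards [hq2pos] with q hq2
        filter_upwards [ae_restrict_mem hSmeas] with p hp hpB
        set x : EuclideanSpace ℝ (Fin m) × ℝ := (q.2 • p.1 + q.1, q.2 * p.2) with hx
        have hxeq : x = q.2 • p + ((q.1, (0:ℝ)) : EuclideanSpace ℝ (Fin m) × ℝ) := by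
          rw [hx, Prod.ext_iff]
          constructor
          · rfl
          · show q.2 * p.2 = q.2 • p.2 + 0
            rw [smul_eq_mul, add_zero]
        have hx2 : 0 ≤ x.2 := by
          rw [hx]
          exact mul_nonneg hq2.le (le_of_lt hp)
        have hxR : R ≤ ‖x‖ := by
          rw [hxeq]
          exact not_lt.mp hpB
        have hdist := invP_dist_le x hx2 (le_trans hR1 hxR)
        have : dist (invP x) ((0 : EuclideanSpace ℝ (Fin m)), (-1:ℝ)) < δ := by
          refine lt_of_le_of_lt (le_trans hdist ?_) hRδ
          exact div_le_div_of_nonneg_left (by norm_num) (by linarith) hxR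
        have := hδ this
        rw [Real.dist_eq] at this
        exact this.le
      · exact ballmass hI1 hw₁0 hw₁max (Nat.succ_pos m) ENNReal.toReal_nonneg hvol1 hR1
          (fun q => (q.1, (0:ℝ))) (fun q => by rw [Prod.norm_def]; simp)
  -- final assembly
  have hlim := (T₁.const_mul (Λ ^ (((m : ℝ) + 1) / 2))).sub
    (T₂.const_mul (Λ ^ ((m : ℝ) / 2) * β * D))
  have heq : (Λ ^ (((m : ℝ) + 1) / 2) * ∫ p in S, w₁ p) * K (0, -1) -
      (Λ ^ ((m : ℝ) / 2) * β * D * ∫ y, w₂ y) * H (0, -1) =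
      Λ ^ (((m : ℝ) + 1) / 2) * (K (0, -1) * ∫ p in S, w₁ p) -
      Λ ^ ((m : ℝ) / 2) * β * D * (H (0, -1) * ∫ y, w₂ y) := by ring
  rw [heq]
  refine hlim.congr fun q => ?_
  have e1 : (Λ ^ (((m : ℝ) + 1) / 2)) *
      (∫ p in S, K (invP (q.2 • p.1 + q.1, q.2 * p.2)) * w₁ p)
      = ∫ p in S, Λ ^ (((m : ℝ) + 1) / 2) * K (invP (q.2 • p.1 + q.1, q.2 * p.2)) /
          (‖p.1‖ ^ 2 + (p.2 + D) ^ 2 - 1) ^ (m + 1) := by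
    rw [← integral_const_mul]
    refine integral_congr_ae (Eventually.of_forall fun p => ?_)
    simp only [hw₁def]
    ring
  have e2 : (Λ ^ ((m : ℝ) / 2) * β * D) *
      (∫ y, H (invP (q.2 • y + q.1, (0:ℝ))) * w₂ y)
      = ∫ y, Λ ^ ((m : ℝ) / 2) * β * D * H (invP (q.2 • y + q.1, 0)) /
          (‖y‖ ^ 2 + D ^ 2 - 1) ^ m := by
    rw [← integral_const_mul]
    refine integral_congr_ae (Eventually.of_forall fun y => ?_)
    simp only [hw₂def]
    ring
  rw [e1, e2]
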